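/- Let ξ be a complex non-real algebraic number of degree greater than 2 with t_2(ξ) > 3/2 (i.e., there is μ ∈ ℂ* and two linearly independent rational polynomials f₁, f₂ of degree at most 2 with μ·f₁(ξ), μ·f₂(ξ) ∈ ℝ). Then 1, ξ + ξ̄, ξ·ξ̄ are linearly dependent over ℚ. -/
import Mathlib


open Polynomial

/-- The ℚ-vector space of polynomials `f ∈ ℚ[X]` of degree at most `n`
with `μ * f(ξ) ∈ ℝ`. -/
noncomputable def Vspace (n : ℕ) (μ ξ : ℂ) : Submodule ℚ ℚ[X] where
  carrier := {f | f.natDegree ≤ n ∧ ∃ r : ℝ, μ * aeval ξ f = (r : ℂ)}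
  zero_mem' := ⟨by simp, 0, by simp⟩
  add_mem' := by
    rintro f g ⟨hf, r, hr⟩ ⟨hg, s, hs⟩
    refine ⟨(natDegree_add_le f g).trans (by simp [hf, hg]), r + s, ?_⟩
    push_cast
    rw [map_add, mul_add, hr, hs]
  smul_mem' := by
    rintro c f ⟨hf, r, hr⟩
    refine ⟨(natDegree_smul_le c f).trans hf, c * r, ?_⟩
    rw [map_smul, Algebra.mul_smul_comm, hr, Rat.smul_def]
    push_cast
    ring

/-- `t_n(ξ)`: the maximum over nonzero `μ ∈ ℂ` of `dim_ℚ V_n(μ,ξ)`. -/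
noncomputable def tdeg (n : ℕ) (ξ : ℂ) : ℕ :=
  sSup {d : ℕ | ∃ μ : ℂ, μ ≠ 0 ∧ d = Module.finrank ℚ (Vspace n μ ξ)}

lemma aeval_deg2 (f : ℚ[X]) (hf : f.natDegree ≤ 2) (z : ℂ) :
    aeval z f = (f.coeff 0 : ℂ) + (f.coeff 1 : ℂ) * z + (f.coeff 2 : ℂ) * z ^ 2 := by
  rw [aeval_eq_sum_range' (Nat.lt_succ_of_le hf) z]
  simp only [Finset.sum_range_succ, Finset.sum_range_zero, Rat.smul_def, zero_add]
  push_cast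
  ring

lemma aeval_ne_zero_deg2 (ξ : ℂ) (hdeg : 2 < (minpoly ℚ ξ).natDegree)
    (f : ℚ[X]) (hf : f.natDegree ≤ 2) (hf0 : f ≠ 0) : aeval ξ f ≠ 0 := by
  intro h
  have h1 := minpoly.degree_le_of_ne_zero ℚ ξ hf0 h
  have h2 : (minpoly ℚ ξ).natDegree ≤ f.natDegree := Polynomial.natDegree_le_natDegree h1
  omega

theorem lin_dep_of_large_tdeg_two (ξ : ℂ) (hξreal : ξ.im ≠ 0)
    (hξalg : IsAlgebraic ℚ ξ) (hdeg : 2 < (minpoly ℚ ξ).natDegree)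
    (ht : 3 < 2 * tdeg 2 ξ) :
    ∃ a b c : ℚ, ¬(a = 0 ∧ b = 0 ∧ c = 0) ∧
      (a : ℂ) + (b : ℂ) * (ξ + (starRingEnd ℂ) ξ)
        + (c : ℂ) * (ξ * (starRingEnd ℂ) ξ) = 0 := by
  classical
  set S := {d : ℕ | ∃ μ : ℂ, μ ≠ 0 ∧ d = Module.finrank ℚ (Vspace 2 μ ξ)} with hS
  have hbound : ∀ μ : ℂ, Module.finrank ℚ (Vspace 2 μ ξ) ≤ 3 := by
    intro μ
    have hle : Vspace 2 μ ξ ≤ Polynomial.degreeLT ℚ 3 := by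
      rintro f ⟨hdf, -⟩
      rw [Polynomial.mem_degreeLT]
      calc f.degree ≤ (f.natDegree : WithBot ℕ) := Polynomial.degree_le_natDegree
        _ ≤ ((2 : ℕ) : WithBot ℕ) := by exact_mod_cast hdf
        _ < 3 := by norm_num
    have : Module.Finite ℚ (Polynomial.degreeLT ℚ 3) :=
      Module.Finite.equiv (Polynomial.degreeLTEquiv ℚ 3).symm
    have h1 := Submodule.finrank_mono hle
    have h2 : Module.finrank ℚ (Polynomial.degreeLT ℚ 3) = 3 := by
      rw [(Polynomial.degreeLTEquiv ℚ 3).finrank_eq]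
      simp
    omega
  have hbdd : BddAbove S := ⟨3, by rintro d ⟨μ, -, rfl⟩; exact hbound μ⟩
  have hne : S.Nonempty := ⟨Module.finrank ℚ (Vspace 2 (1:ℂ) ξ), 1, one_ne_zero, rfl⟩
  have hmem : tdeg 2 ξ ∈ S := Nat.sSup_mem hne hbdd
  obtain ⟨μ, hμ, hdim⟩ := hmem
  have h2le : 2 ≤ Module.finrank ℚ (Vspace 2 μ ξ) := by omega
  obtain ⟨g, hg⟩ := exists_linearIndependent_of_le_finrank h2le
  have hgi : LinearIndependent ℚ (fun i => ((g i : ℚ[X]))) :=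
    hg.map' (Vspace 2 μ ξ).subtype (Submodule.ker_subtype _)
  obtain ⟨hd₁, r₁, hr₁⟩ := (g 0).2
  obtain ⟨hd₂, r₂, hr₂⟩ := (g 1).2
  set f₁ : ℚ[X] := (g 0 : ℚ[X]) with hf₁
  set f₂ : ℚ[X] := (g 1 : ℚ[X]) with hf₂
  have hind : ∀ p q : ℚ, p • f₁ + q • f₂ = 0 → p = 0 ∧ q = 0 := by
    intro p q hpq
    have := Fintype.linearIndependent_iff.mp hgi ![p, q] ?_ ;
    · exact ⟨this 0, this 1⟩
    · simpa [Fin.sum_univ_two] using hpq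
  have hf₁0 : f₁ ≠ 0 := fun h => one_ne_zero ((hind 1 0 (by simp [h])).1)
  have hf₂0 : f₂ ≠ 0 := fun h => one_ne_zero ((hind 0 1 (by simp [h])).2)
  have hv₂ : aeval ξ f₂ ≠ 0 := aeval_ne_zero_deg2 ξ hdeg f₂ hd₂ hf₂0
  have hr₂0 : (r₂ : ℂ) ≠ 0 := by rw [← hr₂]; exact mul_ne_zero hμ hv₂
  have hkey : (r₂ : ℂ) * aeval ξ f₁ = (r₁ : ℂ) * aeval ξ f₂ := by
    have h0 : μ * ((r₂ : ℂ) * aeval ξ f₁ - (r₁ : ℂ) * aeval ξ f₂) = 0 := by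
      have e : μ * ((r₂ : ℂ) * aeval ξ f₁ - (r₁ : ℂ) * aeval ξ f₂)
          = (r₂ : ℂ) * (μ * aeval ξ f₁) - (r₁ : ℂ) * (μ * aeval ξ f₂) := by ring
      rw [e, hr₁, hr₂]; ring
    rcases mul_eq_zero.mp h0 with h | h
    · exact absurd h hμ
    · linear_combination h
  set z := ξ with hz
  set w := (starRingEnd ℂ) ξ with hw
  set a₁ := f₁.coeff 0 with ha₁; set b₁ := f₁.coeff 1 with hb₁; set c₁ := f₁.coeff 2 with hc₁
  set a₂ := f₂.coeff 0 with ha₂; set b₂ := f₂.coeff 1 with hb₂; set c₂ := f₂.coeff 2 with hc₂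
  have he₁ : aeval z f₁ = (a₁ : ℂ) + (b₁ : ℂ) * z + (c₁ : ℂ) * z ^ 2 := aeval_deg2 f₁ hd₁ z
  have he₂ : aeval z f₂ = (a₂ : ℂ) + (b₂ : ℂ) * z + (c₂ : ℂ) * z ^ 2 := aeval_deg2 f₂ hd₂ z
  have hconjkey : (r₂ : ℂ) * ((a₁:ℂ) + (b₁:ℂ) * w + (c₁:ℂ) * w ^ 2)
      = (r₁ : ℂ) * ((a₂:ℂ) + (b₂:ℂ) * w + (c₂:ℂ) * w ^ 2) := by
    have := congrArg (starRingEnd ℂ) hkey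
    simpa [he₁, he₂, map_add, map_mul, map_pow, Complex.conj_ofReal, hw] using this
  rw [he₁, he₂] at hkey
  have hD : ((a₁:ℂ) + (b₁:ℂ)*z + (c₁:ℂ)*z^2) * ((a₂:ℂ) + (b₂:ℂ)*w + (c₂:ℂ)*w^2)
      - ((a₂:ℂ) + (b₂:ℂ)*z + (c₂:ℂ)*z^2) * ((a₁:ℂ) + (b₁:ℂ)*w + (c₁:ℂ)*w^2) = 0 := by
    apply mul_left_cancel₀ hr₂0
    calc (r₂:ℂ) * (((a₁:ℂ) + (b₁:ℂ)*z + (c₁:ℂ)*z^2) * ((a₂:ℂ) + (b₂:ℂ)*w + (c₂:ℂ)*w^2)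
          - ((a₂:ℂ) + (b₂:ℂ)*z + (c₂:ℂ)*z^2) * ((a₁:ℂ) + (b₁:ℂ)*w + (c₁:ℂ)*w^2))
        = ((r₂:ℂ) * ((a₁:ℂ) + (b₁:ℂ)*z + (c₁:ℂ)*z^2)) * ((a₂:ℂ) + (b₂:ℂ)*w + (c₂:ℂ)*w^2)
          - ((a₂:ℂ) + (b₂:ℂ)*z + (c₂:ℂ)*z^2) * ((r₂:ℂ) * ((a₁:ℂ) + (b₁:ℂ)*w + (c₁:ℂ)*w^2)) := by
            ring
      _ = ((r₁:ℂ) * ((a₂:ℂ) + (b₂:ℂ)*z + (c₂:ℂ)*z^2)) * ((a₂:ℂ) + (b₂:ℂ)*w + (c₂:ℂ)*w^2)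
          - ((a₂:ℂ) + (b₂:ℂ)*z + (c₂:ℂ)*z^2) * ((r₁:ℂ) * ((a₂:ℂ) + (b₂:ℂ)*w + (c₂:ℂ)*w^2)) := by
            rw [hkey, hconjkey]
      _ = (r₂:ℂ) * 0 := by ring
  have hwz : w - z ≠ 0 :=
    sub_ne_zero.mpr (fun h => hξreal (Complex.conj_eq_iff_im.mp (hw ▸ hz ▸ h)))
  have hfact : (w - z) * (((a₁*b₂ - b₁*a₂ : ℚ) : ℂ) + ((a₁*c₂ - c₁*a₂ : ℚ) : ℂ) * (z + w)
      + ((b₁*c₂ - c₁*b₂ : ℚ) : ℂ) * (z * w)) = 0 := by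
    rw [← hD]; push_cast; ring
  have hmain := (mul_eq_zero.mp hfact).resolve_left hwz
  refine ⟨a₁*b₂ - b₁*a₂, a₁*c₂ - c₁*a₂, b₁*c₂ - c₁*b₂, ?_, hmain⟩
  rintro ⟨hA0, hB0, hC0⟩
  have hcoe : ∀ (u v : ℚ), u * a₁ = v * a₂ → u * b₁ = v * b₂ → u * c₁ = v * c₂ →
      u • f₁ = v • f₂ := by
    intro u v h0 h1 h2
    ext n
    simp only [Polynomial.coeff_smul, smul_eq_mul]
    rcases Nat.lt_or_ge n 3 with hn | hn
    · interval_cases n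
      · exact h0
      · exact h1
      · exact h2
    · rw [Polynomial.coeff_eq_zero_of_natDegree_lt (by omega),
        Polynomial.coeff_eq_zero_of_natDegree_lt (by omega)]
      ring
  have hprop : ∀ u v : ℚ, u • f₁ = v • f₂ → u = 0 := by
    intro u v h
    have h' : u • f₁ + (-v) • f₂ = 0 := by rw [h, neg_smul]; exact add_neg_cancel _
    exact (hind u (-v) h').1
  have hex : a₂ ≠ 0 ∨ b₂ ≠ 0 ∨ c₂ ≠ 0 := by
    by_contra hcon
    push_neg at hcon
    obtain ⟨h0, h1, h2⟩ := hcon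
    apply hf₂0
    ext n
    rcases Nat.lt_or_ge n 3 with hn | hn
    · interval_cases n <;> simpa
    · simp [Polynomial.coeff_eq_zero_of_natDegree_lt (show f₂.natDegree < n by omega)]
  rcases hex with h | h | h
  · exact h (hprop a₂ a₁ (hcoe a₂ a₁ (mul_comm _ _) (by linear_combination -hA0)
      (by linear_combination -hB0)))
  · exact h (hprop b₂ b₁ (hcoe b₂ b₁ (by linear_combination hA0) (mul_comm _ _)
      (by linear_combination -hC0)))
  · exact h (hprop c₂ c₁ (hcoe c₂ c₁ (by linear_combination hB0) (by linear_combination hC0)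
      (mul_comm _ _)))
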